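/- Let F: 𝔽₂ⁿ → 𝔽₂ⁿ be a quadratic APN function with n even, n ≥ 2. Then the Boolean function φ_F: 𝔽₂ⁿ → 𝔽₂ has algebraic degree n; equivalently, the Hamming weight of φ_F (the number of inputs on which φ_F equals 1) is odd. -/

import Mathlib

open Finset

abbrev V (n : ℕ) : Type := Fin n → ZMod 2

def dotp {n : ℕ} (u y : V n) : ZMod 2 := ∑ i, u i * y i

def IsAPN {n : ℕ} (F : V n → V n) : Prop :=
  ∀ a : V n, a ≠ 0 → ∀ b : V n,
    (Finset.univ.filter (fun x => F x + F (x + a) = b)).card ≤ 2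

/-- `F` has algebraic degree exactly 2: all second derivatives vanish
(degree ≤ 2) and some first derivative is non-constant (degree ≥ 2). -/
def IsQuadratic {n : ℕ} (F : V n → V n) : Prop :=
  (∀ x y a : V n,
    F (x + y + a) + F (x + y) + F (x + a) + F x
      + F (y + a) + F y + F a + F 0 = 0) ∧
  (∃ x a : V n, F (x + a) + F x + F a + F 0 ≠ 0)

/-- `Φ` and `φ` describe the sets `B_a(F)` as affine hyperplanes. -/
def PhiSpec {n : ℕ} (F Φ : V n → V n) (φ : V n → ZMod 2) : Prop :=
  Φ 0 = 0 ∧ φ 0 = 1 ∧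
  ∀ a : V n, a ≠ 0 → Φ a ≠ 0 ∧
    {y : V n | ∃ x, F x + F (x + a) = y} = {y : V n | dotp (Φ a) y = φ a}

def wt {n : ℕ} (a : V n) : ℕ := (Finset.univ.filter (fun i => a i = 1)).card

/-- ANF coefficient of `f` at the monomial with support `a` (Möbius inversion). -/
def anfCoeff {n : ℕ} (f : V n → ZMod 2) (a : V n) : ZMod 2 :=
  ∑ x ∈ Finset.univ.filter (fun x : V n => ∀ i, x i = 1 → a i = 1), f x

/-- Algebraic degree of a Boolean function. -/
def degB {n : ℕ} (f : V n → ZMod 2) : ℕ :=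
  Finset.sup (Finset.univ.filter (fun a : V n => anfCoeff f a ≠ 0)) wt

/-- The monomial with support `a`, evaluated at `x`. -/
def mono {n : ℕ} (a x : V n) : ZMod 2 :=
  ∏ i ∈ Finset.univ.filter (fun i => a i = 1), x i

def walsh {n : ℕ} (f : V n → ZMod 2) (u : V n) : ℤ :=
  ∑ x : V n, (-1 : ℤ) ^ ((f x + dotp u x).val)

/-- The associated function `γ_G(a,b) = 1` as a proposition. -/
def gammaP {n : ℕ} (G : V n → V n) (a b : V n) : Prop :=
  a ≠ 0 ∧ ∃ x, G x + G (x + a) = b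

open Finset

def eps (a : ZMod 2) : ℤ := (-1) ^ a.val

lemma zmod2_em (a : ZMod 2) : a = 0 ∨ a = 1 := by revert a; decide

lemma eps_add (a b : ZMod 2) : eps (a + b) = eps a * eps b := by revert a b; decide

lemma eps_zero : eps 0 = 1 := by decide

lemma eps_one : eps 1 = -1 := by decide

lemma Vadd_self {n : ℕ} (w : V n) : w + w = 0 := by
  funext i; exact (by decide : ∀ c : ZMod 2, c + c = 0) _

lemma twoV {n : ℕ} : (2 : V n) = 0 := by
  funext i; exact (by decide : (2 : ZMod 2) = 0)

lemma two2 : (2 : ZMod 2) = 0 := by decide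

lemma exists_one {n : ℕ} {w : V n} (hw : w ≠ 0) : ∃ i, w i = 1 := by
  by_contra h
  push_neg at h
  apply hw
  funext i
  rcases zmod2_em (w i) with h0 | h1
  · exact h0
  · exact absurd h1 (h i)

lemma dotp_add_left {n : ℕ} (u w y : V n) : dotp (u + w) y = dotp u y + dotp w y := by
  simp [dotp, add_mul, Finset.sum_add_distrib]

lemma dotp_add_right {n : ℕ} (u y z : V n) : dotp u (y + z) = dotp u y + dotp u z := by
  simp [dotp, mul_add, Finset.sum_add_distrib]

lemma dotp_zero_right {n : ℕ} (u : V n) : dotp u 0 = 0 := by simp [dotp]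

lemma dotp_single_left {n : ℕ} (i : Fin n) (y : V n) : dotp (Pi.single i 1) y = y i := by
  simp [dotp, Pi.single_apply, ite_mul]

lemma dotp_single_right {n : ℕ} (u : V n) (i : Fin n) : dotp u (Pi.single i 1) = u i := by
  simp [dotp, Pi.single_apply, mul_ite]

lemma card_filter_flip {n : ℕ} (R : Finset (V n)) (k : V n → ZMod 2) (z₀ : V n)
    (hmem : ∀ z ∈ R, z + z₀ ∈ R) (hk : ∀ z ∈ R, k (z + z₀) = k z + 1) :
    (R.filter fun z => k z = 1).card = (R.filter fun z => k z = 0).card := by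
  apply Finset.card_bij (fun z _ => z + z₀)
  · intro z hz
    simp only [Finset.mem_filter] at hz ⊢
    exact ⟨hmem z hz.1, by rw [hk z hz.1, hz.2]; decide⟩
  · intro a ha b hb h
    have := congrArg (fun w => w + z₀) h
    simpa [add_assoc, Vadd_self] using this
  · intro w hw
    simp only [Finset.mem_filter] at hw
    refine ⟨w + z₀, Finset.mem_filter.2 ⟨hmem w hw.1, ?_⟩, ?_⟩
    · rw [hk w hw.1, hw.2]; decide
    · rw [add_assoc, Vadd_self, add_zero]

lemma sum_eps_split {n : ℕ} (R : Finset (V n)) (k : V n → ZMod 2) :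
    ∑ z ∈ R, eps (k z) =
      ((R.filter fun z => k z = 0).card : ℤ) - ((R.filter fun z => k z = 1).card : ℤ) := by
  rw [← Finset.sum_filter_add_sum_filter_not R (fun z => k z = 0)]
  have h1 : ∑ z ∈ R.filter (fun z => k z = 0), eps (k z)
      = ((R.filter fun z => k z = 0).card : ℤ) := by
    rw [Finset.sum_congr rfl (fun z hz => ?_)]
    · rw [Finset.sum_const, nsmul_eq_mul, mul_one]
    · rw [(Finset.mem_filter.1 hz).2, eps_zero]
  have e : R.filter (fun z => ¬ k z = 0) = R.filter (fun z => k z = 1) := by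
    apply Finset.filter_congr; intro z _; rcases zmod2_em (k z) with h | h <;> simp [h]
  have h2 : ∑ z ∈ R.filter (fun z => ¬ k z = 0), eps (k z)
      = -((R.filter fun z => k z = 1).card : ℤ) := by
    rw [e, Finset.sum_congr rfl (fun z hz => ?_)]
    · rw [Finset.sum_const, nsmul_eq_mul, mul_neg_one]
    · rw [(Finset.mem_filter.1 hz).2, eps_one]
  rw [h1, h2]; ring

lemma sum_eps_zero {n : ℕ} (R : Finset (V n)) (k : V n → ZMod 2) (z₀ : V n)
    (hmem : ∀ z ∈ R, z + z₀ ∈ R) (hk : ∀ z ∈ R, k (z + z₀) = k z + 1) :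
    ∑ z ∈ R, eps (k z) = 0 := by
  rw [sum_eps_split, card_filter_flip R k z₀ hmem hk]; ring

lemma sum_eps_card {n : ℕ} (R : Finset (V n)) (k : V n → ZMod 2)
    (h : ∀ z ∈ R, k z = 0) : ∑ z ∈ R, eps (k z) = (R.card : ℤ) := by
  rw [Finset.sum_congr rfl (fun z hz => by rw [h z hz, eps_zero])]
  rw [Finset.sum_const, nsmul_eq_mul, mul_one]

lemma two_mul_card {n : ℕ} (R : Finset (V n)) (k : V n → ZMod 2) (z₀ : V n)
    (hmem : ∀ z ∈ R, z + z₀ ∈ R) (hk : ∀ z ∈ R, k (z + z₀) = k z + 1) :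
    2 * (R.filter fun z => k z = 1).card = R.card := by
  have h := Finset.card_filter_add_card_filter_not (s := R) (p := fun z => k z = 1)
  have e : R.filter (fun z => ¬ k z = 1) = R.filter (fun z => k z = 0) := by
    apply Finset.filter_congr; intro z _; rcases zmod2_em (k z) with h | h <;> simp [h]
  rw [e] at h
  rw [two_mul]
  nth_rewrite 2 [card_filter_flip R k z₀ hmem hk]
  exact h

def beta {n : ℕ} (F : V n → V n) (x z : V n) : V n := F (x + z) + F x + F z + F 0

lemma beta_add_left {n : ℕ} (F : V n → V n)
    (hq1 : ∀ x y a : V n, F (x + y + a) + F (x + y) + F (x + a) + F x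
      + F (y + a) + F y + F a + F 0 = 0) (x y z : V n) :
    beta F (x + y) z = beta F x z + beta F y z := by
  have h := hq1 x y z
  unfold beta
  linear_combination h - (F (x + z) + F x + F (y + z) + F y + F z + F 0) * (twoV (n := n))

lemma beta_comm {n : ℕ} (F : V n → V n) (x z : V n) : beta F x z = beta F z x := by
  unfold beta; rw [add_comm z x]; ring

lemma beta_add_right {n : ℕ} (F : V n → V n)
    (hq1 : ∀ x y a : V n, F (x + y + a) + F (x + y) + F (x + a) + F x
      + F (y + a) + F y + F a + F 0 = 0) (x z w : V n) :
    beta F x (z + w) = beta F x z + beta F x w := by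
  rw [beta_comm, beta_add_left F hq1, beta_comm F z x, beta_comm F w x]

lemma derivEq {n : ℕ} (F : V n → V n) (x z : V n) :
    F x + F (x + z) = beta F x z + (F z + F 0) := by
  unfold beta
  linear_combination (-(F z) - F 0) * (twoV (n := n))

lemma cardV {n : ℕ} : Fintype.card (V n) = 2 ^ n := by
  simp

lemma even_fiber {n : ℕ} (hn : Even n) (F Φ : V n → V n) (φ : V n → ZMod 2)
    (hq1 : ∀ x y a : V n, F (x + y + a) + F (x + y) + F (x + a) + F x
      + F (y + a) + F y + F a + F 0 = 0)
    (hspec : ∀ a : V n, a ≠ 0 → Φ a ≠ 0 ∧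
      {y : V n | ∃ x, F x + F (x + a) = y} = {y : V n | dotp (Φ a) y = φ a})
    (v a₀ : V n) (ha₀ : a₀ ≠ 0) (hva : Φ a₀ = v) :
    Even ((univ.filter (fun a : V n => a ≠ 0 ∧ φ a = 1 ∧ Φ a = v)).card) := by
  classical
  have addself : ∀ c : ZMod 2, c + c = 0 := by decide
  have fact1 : ∀ a : V n, a ≠ 0 → ∀ x, dotp (Φ a) (F x + F (x + a)) = φ a := by
    intro a ha x
    have hs := (hspec a ha).2
    have hy : (F x + F (x + a)) ∈ {y : V n | ∃ x, F x + F (x + a) = y} := ⟨x, rfl⟩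
    rw [hs] at hy
    exact hy
  have fact2 : ∀ a : V n, a ≠ 0 → φ a = dotp (Φ a) (F a + F 0) := by
    intro a ha
    have h := fact1 a ha 0
    rw [zero_add, add_comm] at h
    exact h.symm
  have fact3 : ∀ a : V n, a ≠ 0 → ∀ x, dotp (Φ a) (beta F x a) = 0 := by
    intro a ha x
    have e : beta F x a = (F x + F (x + a)) + (F a + F 0) := by
      unfold beta; ring
    rw [e, dotp_add_right, fact1 a ha x, ← fact2 a ha]
    exact addself _
  have hv0 : v ≠ 0 := hva ▸ (hspec a₀ ha₀).1
  set R : Finset (V n) := univ.filter (fun z => ∀ x, dotp v (beta F x z) = 0) with hR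
  have hmemR : ∀ z : V n, z ∈ R ↔ ∀ x, dotp v (beta F x z) = 0 := by
    intro z; simp [hR]
  have hRadd : ∀ z ∈ R, ∀ w ∈ R, z + w ∈ R := by
    intro z hz w hw
    rw [hmemR] at hz hw ⊢
    intro x
    rw [beta_add_right F hq1, dotp_add_right, hz x, hw x, add_zero]
  have ha₀R : a₀ ∈ R := by
    rw [hmemR]
    intro x
    rw [← hva]
    exact fact3 a₀ ha₀ x
  set l : V n → ZMod 2 := fun z => dotp v (F z + F 0) with hl
  have hl0 : l 0 = 0 := by
    simp only [hl]
    rw [Vadd_self, dotp_zero_right]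
  have hlshift : ∀ w ∈ R, ∀ z : V n, l (z + w) = l z + l w := by
    intro w hw z
    rw [hmemR] at hw
    have e : F (z + w) + F 0 = beta F z w + ((F z + F 0) + (F w + F 0)) := by
      unfold beta
      linear_combination (-(F z) - F w - F 0) * (twoV (n := n))
    simp only [hl]
    rw [e, dotp_add_right, hw z, zero_add, dotp_add_right]
  have fiber_eq : univ.filter (fun a : V n => a ≠ 0 ∧ φ a = 1 ∧ Φ a = v)
      = R.filter (fun z => l z = 1) := by
    ext z
    simp only [Finset.mem_filter, Finset.mem_univ, true_and]
    constructor
    · rintro ⟨hz0, hφ, hΦ⟩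
      refine ⟨(hmemR z).2 (fun x => by rw [← hΦ]; exact fact3 z hz0 x), ?_⟩
      simp only [hl]
      rw [← hΦ, ← fact2 z hz0, hφ]
    · rintro ⟨hzR, hl1⟩
      have hz0 : z ≠ 0 := by
        rintro rfl
        rw [hl0] at hl1
        exact absurd hl1 (by decide)
      have hΦz := (hspec z hz0).1
      have hzR' := (hmemR z).1 hzR
      have hconst : ∀ y : V n, dotp (Φ z) y = φ z → dotp v y = 1 := by
        intro y hy
        have hmem : y ∈ {y : V n | dotp (Φ z) y = φ z} := hy
        rw [← (hspec z hz0).2] at hmem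
        obtain ⟨x, hx⟩ := hmem
        rw [← hx, derivEq F x z, dotp_add_right, hzR' x, zero_add]
        exact hl1
      have hker : ∀ w : V n, dotp (Φ z) w = 0 → dotp v w = 0 := by
        intro w hw
        obtain ⟨i, hi⟩ := exists_one hΦz
        rcases zmod2_em (φ z) with h0 | h1
        · exact absurd (hconst 0 (by rw [dotp_zero_right, h0])) (by rw [dotp_zero_right]; decide)
        · have hy0 : dotp v (Pi.single i 1) = 1 :=
            hconst _ (by rw [dotp_single_right, hi, h1])
          have hyw : dotp v (Pi.single i 1 + w) = 1 :=
            hconst _ (by rw [dotp_add_right, dotp_single_right, hi, hw, add_zero, h1])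
          rw [dotp_add_right, hy0] at hyw
          calc dotp v w = 1 + (1 + dotp v w) := by rw [← add_assoc, addself, zero_add]
            _ = 0 := by rw [hyw, addself]
      have hall : ∀ x : V n, dotp (Φ z) x = dotp v x := by
        intro x
        rcases zmod2_em (dotp (Φ z) x) with h | h
        · rw [h, hker x h]
        · rw [h]
          obtain ⟨j, hj⟩ := exists_one hv0
          have hvj : dotp v (Pi.single j 1) = 1 := by rw [dotp_single_right, hj]
          have hzj : dotp (Φ z) (Pi.single j 1) = 1 := by
            rcases zmod2_em (dotp (Φ z) (Pi.single j 1)) with h' | h'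
            · have h'' := hker _ h'
              rw [hvj] at h''
              exact absurd h'' (by decide)
            · exact h'
          have hsum : dotp (Φ z) (x + Pi.single j 1) = 0 := by
            rw [dotp_add_right, h, hzj]
            exact addself _
          have hres := hker _ hsum
          rw [dotp_add_right, hvj] at hres
          rcases zmod2_em (dotp v x) with hx0 | hx1
          · rw [hx0, zero_add] at hres
            exact absurd hres (by decide)
          · exact hx1.symm
      have hΦeq : Φ z = v := by
        funext i
        have h := hall (Pi.single i 1)
        rwa [dotp_single_right, dotp_single_right] at h
      refine ⟨hz0, ?_, hΦeq⟩
      rw [fact2 z hz0, hΦeq]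
      exact hl1
  rw [fiber_eq]
  rcases (R.filter fun z => l z = 1).eq_empty_or_nonempty with hemp | ⟨z₀, hz₀⟩
  · rw [hemp]; exact Even.zero
  obtain ⟨hz₀R, hz₀1⟩ := Finset.mem_filter.1 hz₀
  have hflipmem : ∀ z ∈ R, z + z₀ ∈ R := fun z hz => hRadd z hz z₀ hz₀R
  have hflip : ∀ z ∈ R, l (z + z₀) = l z + 1 := fun z _ => by
    rw [hlshift z₀ hz₀R z, hz₀1]
  have hhalf : 2 * (R.filter fun z => l z = 1).card = R.card :=
    two_mul_card R l z₀ hflipmem hflip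
  obtain ⟨i, hi⟩ := exists_one ha₀
  have hReven : Even R.card := by
    have h := two_mul_card R (fun z => dotp z (Pi.single i 1)) a₀
      (fun z hz => hRadd z hz a₀ ha₀R)
      (fun z _ => by
        show dotp (z + a₀) (Pi.single i 1) = dotp z (Pi.single i 1) + 1
        rw [dotp_add_left, dotp_single_right, dotp_single_right, hi])
    exact h ▸ even_two_mul _
  -- Walsh transform argument
  set g : V n → ZMod 2 := fun x => dotp v (F x) with hg
  set S : V n → ℤ := fun u => ∑ x : V n, eps (g x + dotp u x) with hS
  have e_cardV : ((Fintype.card (V n) : ℕ) : ℤ) = 2 ^ n := by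
    rw [cardV]; push_cast; ring
  have inner1 : ∀ z : V n, ∑ x : V n, eps (dotp v (beta F x z))
      = if z ∈ R then (2 ^ n : ℤ) else 0 := by
    intro z
    by_cases hz : z ∈ R
    · rw [if_pos hz, sum_eps_card univ _ (fun x _ => (hmemR z).1 hz x), Finset.card_univ]
      exact e_cardV
    · rw [if_neg hz]
      rw [hmemR] at hz
      push_neg at hz
      obtain ⟨x₀, hx₀⟩ := hz
      have hx₀1 : dotp v (beta F x₀ z) = 1 := by
        rcases zmod2_em (dotp v (beta F x₀ z)) with h | h
        · exact absurd h hx₀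
        · exact h
      exact sum_eps_zero univ _ x₀ (fun x _ => Finset.mem_univ _)
        (fun x _ => by rw [beta_add_left F hq1, dotp_add_right, hx₀1])
  have Ssq : ∀ u : V n, (S u) ^ 2 = 2 ^ n * ∑ z ∈ R, eps (l z + dotp u z) := by
    intro u
    have step : (S u) ^ 2 = ∑ x : V n, ∑ z : V n,
        eps (dotp v (beta F x z)) * eps (l z + dotp u z) := by
      rw [sq]
      simp only [hS]
      rw [Finset.sum_mul_sum]
      refine Finset.sum_congr rfl (fun x _ => ?_)
      refine (Fintype.sum_equiv (Equiv.addLeft x)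
        (fun z => eps (dotp v (beta F x z)) * eps (l z + dotp u z))
        (fun y => eps (g x + dotp u x) * eps (g y + dotp u y)) (fun z => ?_)).symm
      have hxz : x + (x + z) = z := by rw [← add_assoc, Vadd_self, zero_add]
      show eps (dotp v (beta F x z)) * eps (l z + dotp u z)
        = eps (g x + dotp u x) * eps (g (x + z) + dotp u (x + z))
      rw [← eps_add, ← eps_add]
      congr 1
      have e1 : dotp u (x + z) = dotp u x + dotp u z := dotp_add_right u x z
      have e2 : g x + g (x + z) = dotp v (beta F x z) + l z := by
        simp only [hg, hl]
        rw [← dotp_add_right, derivEq F x z, dotp_add_right]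
      linear_combination - e2 - e1 - dotp u x * two2
    rw [step, Finset.sum_comm]
    have factor : ∀ z : V n, ∑ x : V n, eps (dotp v (beta F x z)) * eps (l z + dotp u z)
        = (if z ∈ R then (2 ^ n : ℤ) else 0) * eps (l z + dotp u z) := by
      intro z
      rw [← Finset.sum_mul, inner1 z]
    rw [Finset.sum_congr rfl (fun z _ => factor z)]
    simp only [ite_mul, zero_mul]
    rw [← Finset.sum_filter]
    have hfR : univ.filter (fun z => z ∈ R) = R := by
      ext z; simp
    rw [hfR, Finset.mul_sum]
  have h0R : (0 : V n) ∈ R := by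
    rw [hmemR]
    intro x
    have e : beta F x 0 = 0 := by
      unfold beta
      rw [add_zero]
      linear_combination (F x + F 0) * (twoV (n := n))
    rw [e, dotp_zero_right]
  have inner2 : ∀ z : V n, ∑ u : V n, eps (l z + dotp u z)
      = if z = 0 then (2 ^ n : ℤ) else 0 := by
    intro z
    by_cases hz : z = 0
    · subst hz
      rw [if_pos rfl,
        sum_eps_card univ _ (fun u _ => by rw [dotp_zero_right, hl0, add_zero]),
        Finset.card_univ]
      exact e_cardV
    · rw [if_neg hz]
      obtain ⟨j, hj⟩ := exists_one hz
      exact sum_eps_zero univ _ (Pi.single j 1) (fun u _ => Finset.mem_univ _)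
        (fun u _ => by rw [dotp_add_left, dotp_single_left, hj]; ring)
  have parseval : ∑ u : V n, (S u) ^ 2 = 2 ^ n * 2 ^ n := by
    rw [Finset.sum_congr rfl (fun u _ => Ssq u), ← Finset.mul_sum, Finset.sum_comm]
    rw [Finset.sum_congr rfl (fun z _ => inner2 z), Finset.sum_ite_eq' R 0 (fun _ => (2 ^ n : ℤ)),
      if_pos h0R]
  have hex : ∃ u : V n, S u ≠ 0 := by
    by_contra h
    push_neg at h
    have hzero : ∑ u : V n, (S u) ^ 2 = 0 :=
      Finset.sum_eq_zero (fun u _ => by rw [h u]; ring)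
    rw [parseval] at hzero
    exact (by positivity : (0:ℤ) < 2 ^ n * 2 ^ n).ne' hzero
  obtain ⟨u, hu⟩ := hex
  have hSu : (S u) ^ 2 = 2 ^ n * (R.card : ℤ) := by
    by_cases hk1 : ∃ z₁ ∈ R, l z₁ + dotp u z₁ = 1
    · obtain ⟨z₁, hz₁R, hz₁⟩ := hk1
      have hzero : ∑ z ∈ R, eps (l z + dotp u z) = 0 :=
        sum_eps_zero R _ z₁ (fun z hz => hRadd z hz z₁ hz₁R)
          (fun z hz => by
            rw [hlshift z₁ hz₁R z, dotp_add_right, ← hz₁]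
            ring)
      exact absurd ((pow_eq_zero_iff (two_ne_zero)).1 (by rw [Ssq u, hzero, mul_zero])) hu
    · push_neg at hk1
      have hall0 : ∀ z ∈ R, l z + dotp u z = 0 := fun z hz => by
        rcases zmod2_em (l z + dotp u z) with h | h
        · exact h
        · exact absurd h (hk1 z hz)
      rw [Ssq u, sum_eps_card R _ hall0]
  obtain ⟨m, hm⟩ := hn
  set s : ℕ := (S u).natAbs with hs
  have hs2 : (s : ℤ) ^ 2 = 2 ^ n * (R.card : ℤ) := by
    rw [hs, Int.natAbs_sq, hSu]
  have hsnat : s ^ 2 = 2 ^ n * R.card := by exact_mod_cast hs2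
  have hpow : (2:ℕ) ^ n = (2 ^ m) ^ 2 := by rw [← pow_mul]; congr 1; omega
  have hdvd : 2 ^ m ∣ s := by
    refine (Nat.pow_dvd_pow_iff (by norm_num : 2 ≠ 0)).1 ?_
    rw [hsnat, hpow]
    exact Dvd.intro _ rfl
  obtain ⟨t, ht⟩ := hdvd
  have hcardt : R.card = t ^ 2 := by
    have h1 : (2 ^ m) ^ 2 * R.card = (2 ^ m) ^ 2 * t ^ 2 := by
      have e : s ^ 2 = (2 ^ m) ^ 2 * t ^ 2 := by rw [ht]; ring
      rw [← e, ← hpow, hsnat]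
    exact Nat.eq_of_mul_eq_mul_left (by positivity) h1
  have htEven : Even t := by
    by_contra hodd
    rw [Nat.not_even_iff_odd] at hodd
    have hoddsq : Odd (R.card) := hcardt ▸ hodd.pow
    exact (Nat.not_even_iff_odd.2 hoddsq) hReven
  obtain ⟨t', ht'⟩ := htEven
  have hc4 : R.card = 4 * t' ^ 2 := by rw [hcardt, ht']; ring
  exact ⟨t' ^ 2, by omega⟩

theorem stmt5 {n : ℕ} (hn : Even n) (h2 : 2 ≤ n) (F Φ : V n → V n) (φ : V n → ZMod 2)
    (hq : IsQuadratic F) (hAPN : IsAPN F) (hspec : PhiSpec F Φ φ) :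
    degB φ = n ∧ Odd (Finset.univ.filter (fun a : V n => φ a = 1)).card := by
  classical
  obtain ⟨hΦ0, hφ0, hspec'⟩ := hspec
  have hq1 := hq.1
  have hsplit : univ.filter (fun a : V n => φ a = 1)
      = insert (0 : V n) (univ.filter (fun a : V n => a ≠ 0 ∧ φ a = 1)) := by
    ext a
    simp only [Finset.mem_filter, Finset.mem_univ, true_and, Finset.mem_insert]
    constructor
    · intro h
      by_cases h0 : a = 0
      · exact Or.inl h0
      · exact Or.inr ⟨h0, h⟩
    · rintro (rfl | ⟨-, h⟩)
      · exact hφ0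
      · exact h
  have hnotmem : (0 : V n) ∉ univ.filter (fun a : V n => a ≠ 0 ∧ φ a = 1) := by simp
  have heven : Even ((univ.filter (fun a : V n => a ≠ 0 ∧ φ a = 1)).card) := by
    set s : Finset (V n) := univ.filter (fun a : V n => a ≠ 0 ∧ φ a = 1) with hs
    rw [Finset.card_eq_sum_card_fiberwise (f := Φ) (t := s.image Φ)
      (fun x hx => Finset.mem_image_of_mem Φ hx)]
    have hdvd : ∀ v ∈ s.image Φ, 2 ∣ (s.filter (fun x => Φ x = v)).card := by
      intro v hv
      obtain ⟨a₀, ha₀s, ha₀v⟩ := Finset.mem_image.1 hv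
      obtain ⟨ha₀0, -⟩ := (Finset.mem_filter.1 ha₀s).2
      have he := even_fiber hn F Φ φ hq1 hspec' v a₀ ha₀0 ha₀v
      have hf : s.filter (fun x => Φ x = v)
          = univ.filter (fun a : V n => a ≠ 0 ∧ φ a = 1 ∧ Φ a = v) := by
        rw [hs, Finset.filter_filter]
        apply Finset.filter_congr
        intro x _
        tauto
      rw [hf]
      obtain ⟨c, hc⟩ := he
      exact ⟨c, by omega⟩
    obtain ⟨c, hc⟩ := Finset.dvd_sum hdvd
    exact ⟨c, by omega⟩
  have hodd : Odd ((univ.filter (fun a : V n => φ a = 1)).card) := by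
    rw [hsplit, Finset.card_insert_of_notMem hnotmem]
    exact heven.add_one
  refine ⟨?_, hodd⟩
  have hone : anfCoeff φ (fun _ => 1) = 1 := by
    unfold anfCoeff
    have hfilter : univ.filter (fun x : V n => ∀ i, x i = 1 → (fun _ : Fin n => (1 : ZMod 2)) i = 1)
        = univ := Finset.filter_true_of_mem (fun x _ => fun i _ => rfl)
    rw [hfilter]
    have hsum : ∑ x : V n, φ x = ((univ.filter (fun a : V n => φ a = 1)).card : ZMod 2) := by
      rw [← Finset.sum_filter_add_sum_filter_not univ (fun a => φ a = 1)]
      have h1 : ∑ x ∈ univ.filter (fun a : V n => φ a = 1), φ x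
          = ((univ.filter (fun a : V n => φ a = 1)).card : ZMod 2) := by
        rw [Finset.sum_congr rfl (fun x hx => (Finset.mem_filter.1 hx).2), Finset.sum_const,
          nsmul_eq_mul, mul_one]
      have h2 : ∑ x ∈ univ.filter (fun a : V n => ¬ φ a = 1), φ x = 0 := by
        refine Finset.sum_eq_zero (fun x hx => ?_)
        rcases zmod2_em (φ x) with h | h
        · exact h
        · exact absurd h (Finset.mem_filter.1 hx).2
      rw [h1, h2, add_zero]
    rw [hsum]
    obtain ⟨c, hc⟩ := hodd
    rw [hc]
    push_cast
    rw [two2]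
    ring
  have hub : degB φ ≤ n := by
    unfold degB
    apply Finset.sup_le
    intro a _
    unfold wt
    calc (univ.filter fun i => a i = 1).card
        ≤ (univ : Finset (Fin n)).card := Finset.card_filter_le _ _
      _ = n := Finset.card_univ.trans (Fintype.card_fin n)
  have hlb : n ≤ degB φ := by
    have hmem : (fun _ : Fin n => (1 : ZMod 2)) ∈ univ.filter (fun a : V n => anfCoeff φ a ≠ 0) := by
      simp only [Finset.mem_filter, Finset.mem_univ, true_and]
      rw [hone]
      exact one_ne_zero
    have hle := Finset.le_sup (f := wt) hmem
    have hwt : wt (fun _ : Fin n => (1 : ZMod 2)) = n := by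
      unfold wt
      rw [Finset.filter_true_of_mem (fun i _ => rfl), Finset.card_univ, Fintype.card_fin]
    rw [hwt] at hle
    exact hle
  omega
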